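/- Let ε_E ∈ O_E^× be a unit that is not a square in O_E^×, set ξ := diag(ε_E, (ε̄_E)^{−1}), and let c ∈ O_E^× satisfy c² = ε_E·ε̄_E (such c exists by Hensel's lemma since ε_E·ε̄_E ∈ O_F^× and q is odd). Set h := [[0, −c],[c^{−1}, 0]]. Then h belongs to SU(1,1)(F) = {g ∈ G : det g = 1}, and ξ·T_{1,1}·ξ^{−1} = h·T_{1,1}·h^{−1}. -/

import Mathlib

open Matrix
open scoped Pointwise

noncomputable section

/-- Ambient data for the paper: `E` is the unramified quadratic extension `F(√ε)` of a
nonarchimedean local field `F` of odd residual characteristic.  The field `F` is realized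
as the fixed field of the nontrivial `F`-automorphism `σ` of `E`; `ν` is the discrete
valuation of `E` (extending the valuation of `F` normalized by `ν ϖ = 1` at a uniformizer
`ϖ` of `F`, and still surjecting onto `ℤ` since `E/F` is unramified); `q` is the (odd)
cardinality of the residue field of `F` (so `q²` is that of `E`); `ε ∈ O_F^×` is a
non-square unit and `sqε = √ε` generates `E` over `F`.  The standard facts about the
norm map and squares are included as fields. -/
structure Setting (E : Type*) [Field E] where
  /-- the nontrivial `F`-automorphism of `E`, written `x̄ = σ x` -/
  σ : E →+* E
  σσ : ∀ x, σ (σ x) = x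
  σ_ne_id : σ ≠ RingHom.id E
  /-- the valuation (only its values at nonzero elements matter) -/
  ν : E → ℤ
  ν_mul : ∀ {x y : E}, x ≠ 0 → y ≠ 0 → ν (x * y) = ν x + ν y
  ν_add : ∀ {x y : E}, x ≠ 0 → y ≠ 0 → x + y ≠ 0 → min (ν x) (ν y) ≤ ν (x + y)
  ν_σ : ∀ x, ν (σ x) = ν x
  ν_surj : ∀ n : ℤ, ∃ x : E, x ≠ 0 ∧ ν x = n
  /-- a uniformizer of `F` -/
  ϖ : E
  ϖ_ne_zero : ϖ ≠ 0
  ϖ_fixed : σ ϖ = ϖ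
  ν_ϖ : ν ϖ = 1
  /-- the residual cardinality of `F` -/
  q : ℕ
  q_odd : Odd q
  one_lt_q : 1 < q
  /-- a non-square unit of `O_F` -/
  ε : E
  ε_fixed : σ ε = ε
  ε_ne_zero : ε ≠ 0
  ν_ε : ν ε = 0
  ε_nonsquare : ¬ ∃ f : E, σ f = f ∧ f * f = ε
  /-- a square root `√ε ∈ E` of `ε` -/
  sqε : E
  sqε_sq : sqε * sqε = ε
  sqε_conj : σ sqε = -sqε
  /-- `E = F(√ε)` -/
  generates : ∀ x : E, ∃ a b : E, σ a = a ∧ σ b = b ∧ x = a + b * sqε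
  /-- the norm maps `O_E^×` onto `O_F^×` -/
  norm_surj_units : ∀ y : E, σ y = y → y ≠ 0 → ν y = 0 →
    ∃ x : E, x ≠ 0 ∧ ν x = 0 ∧ x * σ x = y
  /-- the norm maps `1 + p_E^d` onto `1 + p_F^d` for every `d ≥ 1` -/
  norm_surj_one_add : ∀ d : ℤ, 1 ≤ d → ∀ y : E, σ y = y → (y - 1 = 0 ∨ d ≤ ν (y - 1)) →
    ∃ x : E, (x - 1 = 0 ∨ d ≤ ν (x - 1)) ∧ x * σ x = y
  /-- the residue field of `F` has `q` elements -/
  residue_F : ∃ R : Finset E, R.card = q ∧ (∀ r ∈ R, σ r = r ∧ (r = 0 ∨ 0 ≤ ν r)) ∧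
    ∀ x : E, σ x = x → (x = 0 ∨ 0 ≤ ν x) →
      ∃! r, r ∈ R ∧ (x - r = 0 ∨ 1 ≤ ν (x - r))
  /-- the residue field of `E` has `q²` elements -/
  residue_E : ∃ R : Finset E, R.card = q ^ 2 ∧ (∀ r ∈ R, r = 0 ∨ 0 ≤ ν r) ∧
    ∀ x : E, (x = 0 ∨ 0 ≤ ν x) →
      ∃! r, r ∈ R ∧ (x - r = 0 ∨ 1 ≤ ν (x - r))
  /-- Hensel: a unit of `O_E` that is a square modulo `p_E` is a square (residue char. odd) -/
  hensel_sq : ∀ u w : E, u ≠ 0 → ν u = 0 → w ≠ 0 → ν w = 0 →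
    (w * w - u = 0 ∨ 1 ≤ ν (w * w - u)) → ∃ v : E, v * v = u

namespace Setting

variable {E : Type*} [Field E] (S : Setting E)

/-- `x` lies in the ring of integers `O_E`. -/
def inOE (x : E) : Prop := x = 0 ∨ 0 ≤ S.ν x

/-- `x` lies in the (fractional, if `d ≤ 0`) ideal `p_E^d`. -/
def inpE (d : ℤ) (x : E) : Prop := x = 0 ∨ d ≤ S.ν x

/-- `x` is a unit of `O_E`. -/
def unitOE (x : E) : Prop := x ≠ 0 ∧ S.ν x = 0

/-- `x` lies in the subfield `F` (the fixed field of `σ`). -/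
def inF (x : E) : Prop := S.σ x = x

/-- `x` is a unit of `O_F`. -/
def unitOF (x : E) : Prop := S.σ x = x ∧ x ≠ 0 ∧ S.ν x = 0

/-- `x` lies in `E¹`, i.e. has norm one. -/
def normOne (x : E) : Prop := x * S.σ x = 1

/-- `x ∈ √ε·F`. -/
def inSqεF (x : E) : Prop := ∃ f : E, S.σ f = f ∧ x = S.sqε * f

/-- Entrywise application of `σ` to a matrix, `ḡ`. -/
def mbar (g : Matrix (Fin 2) (Fin 2) E) : Matrix (Fin 2) (Fin 2) E :=
  Matrix.of fun i j => S.σ (g i j)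

/-- The antidiagonal matrix `w = [[0,1],[1,0]]` defining the hermitian form. -/
def wmat (_S : Setting E) : Matrix (Fin 2) (Fin 2) E := !![0, 1; 1, 0]

/-- Membership in `G = U(1,1)(F) = {g : ḡᵀ·w·g = w}`. -/
def inG (g : Matrix (Fin 2) (Fin 2) E) : Prop :=
  (S.mbar g)ᵀ * S.wmat * g = S.wmat

/-- `G = U(1,1)(F)`, as a set of 2×2 matrices over `E`. -/
def Gset : Set (Matrix (Fin 2) (Fin 2) E) := {g | S.inG g}

/-- `G_der = SU(1,1)(F) = {g ∈ G : det g = 1}`. -/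
def Gder : Set (Matrix (Fin 2) (Fin 2) E) := {g | S.inG g ∧ g.det = 1}

/-- The standard maximal compact subgroup `K` of `G` (entries in `O_E`). -/
def Kset : Set (Matrix (Fin 2) (Fin 2) E) := {g | S.inG g ∧ ∀ i j, S.inOE (g i j)}

/-- The congruence subgroup `K_d = {k ∈ K : k − 1 ∈ p_E^d·M₂(O_E)}`. -/
def Kfil (d : ℤ) : Set (Matrix (Fin 2) (Fin 2) E) :=
  {g | g ∈ S.Kset ∧ ∀ i j, S.inpE d ((g - 1) i j)}

/-- The subgroup `B` of upper triangular matrices in `K`. -/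
def Bset : Set (Matrix (Fin 2) (Fin 2) E) := {g | g ∈ S.Kset ∧ g 1 0 = 0}

/-- The subgroup `B^op` of lower triangular matrices in `K`. -/
def Bop : Set (Matrix (Fin 2) (Fin 2) E) := {g | g ∈ S.Kset ∧ g 0 1 = 0}

/-- The center `Z = {z·I : z ∈ E¹}` of `G`. -/
def Zset : Set (Matrix (Fin 2) (Fin 2) E) :=
  {g | ∃ z : E, S.normOne z ∧ g = z • (1 : Matrix (Fin 2) (Fin 2) E)}

/-- The matrix `α^t = diag(ϖ^{−t}, ϖ^t)`. -/
def αmat (t : ℕ) : Matrix (Fin 2) (Fin 2) E := !![(S.ϖ ^ t)⁻¹, 0; 0, S.ϖ ^ t]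

/-- The matrix `η = diag(1, ϖ)` (it normalizes `G`). -/
def ηmat : Matrix (Fin 2) (Fin 2) E := !![1, 0; 0, S.ϖ]

/-- The matrix `η⁻¹ = diag(1, ϖ⁻¹)`. -/
def ηinv : Matrix (Fin 2) (Fin 2) E := !![1, 0; 0, S.ϖ⁻¹]

/-- The torus `T_{γ₁,γ₂} = {[[a,bγ₁],[bγ₂,a]] : a·ā + b·b̄·γ₁γ₂ = 1, ā·b ∈ √ε·F}`. -/
def Tset (γ₁ γ₂ : E) : Set (Matrix (Fin 2) (Fin 2) E) :=
  {g | ∃ a b : E, g = !![a, b * γ₁; b * γ₂, a] ∧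
    a * S.σ a + b * S.σ b * (γ₁ * γ₂) = 1 ∧ S.inSqεF (S.σ a * b)}

/-- The Moy–Prasad filtration subgroup `G_{y,r}` of `G` (for `r > 0`). -/
def Gfil (y r : ℚ) : Set (Matrix (Fin 2) (Fin 2) E) :=
  {g | S.inG g ∧ S.inpE ⌈r⌉ (g 0 0 - 1) ∧ S.inpE ⌈r⌉ (g 1 1 - 1) ∧
    S.inpE ⌈r - y⌉ (g 0 1) ∧ S.inpE ⌈r + y⌉ (g 1 0)}

/-- `G_{y,0+} = ⋃_{r>0} G_{y,r}`. -/
def Gfil0plus (y : ℚ) : Set (Matrix (Fin 2) (Fin 2) E) :=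
  {g | ∃ r : ℚ, 0 < r ∧ g ∈ S.Gfil y r}

end Setting

namespace Setting

variable {E : Type*} [Field E] (S : Setting E)

lemma nu_one : S.ν (1 : E) = 0 := by
  have h := S.ν_mul (one_ne_zero (α := E)) (one_ne_zero (α := E))
  rw [one_mul] at h; omega

lemma nu_neg_one : S.ν (-1 : E) = 0 := by
  have h := S.ν_mul (neg_ne_zero.mpr (one_ne_zero (α := E)))
    (neg_ne_zero.mpr (one_ne_zero (α := E)))
  rw [neg_mul_neg, one_mul, S.nu_one] at h; omega

lemma nu_neg {x : E} (hx : x ≠ 0) : S.ν (-x) = S.ν x := by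
  have h := S.ν_mul (neg_ne_zero.mpr (one_ne_zero (α := E))) hx
  rw [neg_one_mul, S.nu_neg_one] at h; omega

lemma nu_inv {x : E} (hx : x ≠ 0) : S.ν x⁻¹ = - S.ν x := by
  have h := S.ν_mul hx (inv_ne_zero hx)
  rw [mul_inv_cancel₀ hx, S.nu_one] at h; omega

lemma sigma_ne_zero {x : E} (hx : x ≠ 0) : S.σ x ≠ 0 := by
  intro h
  apply hx
  have h2 := congrArg S.σ h
  rwa [S.σσ, _root_.map_zero] at h2

lemma inOE_one : S.inOE (1 : E) := Or.inr (by rw [S.nu_one])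

lemma inOE_add {x y : E} (hx : S.inOE x) (hy : S.inOE y) : S.inOE (x + y) := by
  by_cases hx0 : x = 0; · subst hx0; simpa using hy
  by_cases hy0 : y = 0; · subst hy0; simpa using hx
  by_cases hxy : x + y = 0; · exact Or.inl hxy
  replace hx := hx.resolve_left hx0
  replace hy := hy.resolve_left hy0
  exact Or.inr (le_trans (le_min hx hy) (S.ν_add hx0 hy0 hxy))

lemma inOE_neg {x : E} (hx : S.inOE x) : S.inOE (-x) := by
  by_cases hx0 : x = 0; · subst hx0; simpa using hx
  rcases hx with h | h
  · exact absurd h hx0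
  · exact Or.inr (by rw [S.nu_neg hx0]; exact h)

lemma inOE_mul {x y : E} (hx : S.inOE x) (hy : S.inOE y) : S.inOE (x * y) := by
  by_cases hx0 : x = 0; · exact Or.inl (by rw [hx0, zero_mul])
  by_cases hy0 : y = 0; · exact Or.inl (by rw [hy0, mul_zero])
  replace hx := hx.resolve_left hx0
  replace hy := hy.resolve_left hy0
  exact Or.inr (by rw [S.ν_mul hx0 hy0]; omega)

lemma inOE_sub {x y : E} (hx : S.inOE x) (hy : S.inOE y) : S.inOE (x - y) := by
  rw [sub_eq_add_neg]; exact S.inOE_add hx (S.inOE_neg hy)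

lemma inpE_one_add {x y : E} (hx : S.inpE 1 x) (hy : S.inpE 1 y) : S.inpE 1 (x + y) := by
  by_cases hx0 : x = 0; · subst hx0; simpa using hy
  by_cases hy0 : y = 0; · subst hy0; simpa using hx
  by_cases hxy : x + y = 0; · exact Or.inl hxy
  replace hx := hx.resolve_left hx0
  replace hy := hy.resolve_left hy0
  exact Or.inr (le_trans (le_min hx hy) (S.ν_add hx0 hy0 hxy))

lemma inpE_one_neg {x : E} (hx : S.inpE 1 x) : S.inpE 1 (-x) := by
  by_cases hx0 : x = 0; · subst hx0; simpa using hx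
  rcases hx with h | h
  · exact absurd h hx0
  · exact Or.inr (by rw [S.nu_neg hx0]; exact h)

lemma inpE_one_sigma {x : E} (hx : S.inpE 1 x) : S.inpE 1 (S.σ x) := by
  rcases hx with h | h
  · exact Or.inl (by rw [h, _root_.map_zero])
  · exact Or.inr (by rw [S.ν_σ]; exact h)

lemma unit_of_cong {x y : E} (hx : x ≠ 0) (hνx : S.ν x = 0) (h : S.inpE 1 (x - y)) :
    y ≠ 0 ∧ S.ν y = 0 := by
  by_cases hd0 : x - y = 0
  · have hyx : y = x := by rw [sub_eq_zero] at hd0; exact hd0.symm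
    rw [hyx]; exact ⟨hx, hνx⟩
  have hd := h.resolve_left hd0
  have hy0 : y ≠ 0 := by
    rintro rfl
    rw [sub_zero] at hd
    omega
  have e1 : x + -(x - y) = y := by ring
  have h1 := S.ν_add hx (neg_ne_zero.mpr hd0) (by rw [e1]; exact hy0)
  rw [e1, S.nu_neg hd0] at h1
  have e2 : y + (x - y) = x := by ring
  have h2 := S.ν_add hy0 hd0 (by rw [e2]; exact hx)
  rw [e2] at h2
  refine ⟨hy0, ?_⟩
  omega

lemma inpE_one_of_mul {x y : E} (hx : S.inOE x) (hy : S.inOE y) (h : S.inpE 1 (x * y)) :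
    S.inpE 1 x ∨ S.inpE 1 y := by
  by_cases hx0 : x = 0; · exact Or.inl (Or.inl hx0)
  by_cases hy0 : y = 0; · exact Or.inr (Or.inl hy0)
  have hxy : x * y ≠ 0 := mul_ne_zero hx0 hy0
  have h1 := h.resolve_left hxy
  rw [S.ν_mul hx0 hy0] at h1
  have hx1 := hx.resolve_left hx0
  have hy1 := hy.resolve_left hy0
  by_cases hc : 1 ≤ S.ν x
  · exact Or.inl (Or.inr hc)
  · exact Or.inr (Or.inr (by omega))

lemma inpE_one_of_unit_mul {u x : E} (hu0 : u ≠ 0) (hνu : S.ν u = 0) (h : S.inpE 1 (u * x)) :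
    S.inpE 1 x := by
  by_cases hx0 : x = 0; · exact Or.inl hx0
  have hux : u * x ≠ 0 := mul_ne_zero hu0 hx0
  have h1 := h.resolve_left hux
  rw [S.ν_mul hu0 hx0] at h1
  exact Or.inr (by omega)

/-- A fixed-point-free involution on a finset forces even cardinality. -/
lemma even_card_of_fpf {α : Type*} [DecidableEq α] (s : Finset α) :
    ∀ j : α → α, (∀ a ∈ s, j a ∈ s) → (∀ a ∈ s, j (j a) = a) → (∀ a ∈ s, j a ≠ a) →
    Even s.card := by
  induction s using Finset.strongInduction with
  | _ s ih =>
    intro j h1 h2 h3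
    rcases s.eq_empty_or_nonempty with rfl | ⟨a, ha⟩
    · simp
    have hja := h1 a ha
    have hpair : ({a, j a} : Finset α) ⊆ s := by
      intro x hx
      rcases Finset.mem_insert.mp hx with rfl | hx
      · exact ha
      · rw [Finset.mem_singleton] at hx; rw [hx]; exact hja
    have hss : s \ {a, j a} ⊂ s := Finset.sdiff_ssubset hpair ⟨a, by simp⟩
    have hmem' : ∀ x, x ∈ s \ ({a, j a} : Finset α) ↔ x ∈ s ∧ x ≠ a ∧ x ≠ j a := by
      intro x
      simp [Finset.mem_sdiff, not_or]
    have hE := ih _ hss j ?_ ?_ ?_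
    · have hc2 : ({a, j a} : Finset α).card = 2 := Finset.card_pair (Ne.symm (h3 a ha))
      have hcs := Finset.card_sdiff_of_subset hpair
      have hle := Finset.card_le_card hpair
      rw [hc2] at hcs hle
      obtain ⟨k, hk⟩ := hE
      exact ⟨k + 1, by omega⟩
    · intro x hx
      rw [hmem'] at hx ⊢
      refine ⟨h1 x hx.1, ?_, ?_⟩
      · intro h
        have h' := congrArg j h
        rw [h2 x hx.1] at h'
        exact hx.2.2 h'
      · intro h
        have h' := congrArg j h
        rw [h2 x hx.1, h2 a ha] at h'
        exact hx.2.1 h'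
    · intro x hx; exact h2 x ((hmem' x).mp hx).1
    · intro x hx; exact h3 x ((hmem' x).mp hx).1

/-- Build a total representative function from the unique-representative property. -/
lemma exists_rep (R : Finset E)
    (hrepEU : ∀ x : E, S.inF x → S.inOE x → ∃! r, r ∈ R ∧ S.inpE 1 (x - r)) :
    ∃ rep : E → E, ∀ x : E, S.inF x → S.inOE x →
      rep x ∈ R ∧ S.inpE 1 (x - rep x) ∧ ∀ r' ∈ R, S.inpE 1 (x - r') → r' = rep x := by
  have h : ∀ x : E, ∃ r : E, S.inF x → S.inOE x →
      r ∈ R ∧ S.inpE 1 (x - r) ∧ ∀ r' ∈ R, S.inpE 1 (x - r') → r' = r := by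
    intro x
    by_cases h1 : S.inF x
    · by_cases h2 : S.inOE x
      · obtain ⟨r, ⟨ha, hb⟩, hu⟩ := hrepEU x h1 h2
        exact ⟨r, fun _ _ => ⟨ha, hb, fun r' hr' hc => hu r' ⟨hr', hc⟩⟩⟩
      · exact ⟨0, fun _ h => absurd h h2⟩
    · exact ⟨0, fun h => absurd h h1⟩
  choose rep hrep using h
  exact ⟨rep, hrep⟩

lemma not_inpE_one_two : ¬ S.inpE 1 (2 : E) := by
  intro h2
  classical
  obtain ⟨R, hcard, hmem, hrepEU⟩ := S.residue_F
  obtain ⟨rep, hrep⟩ := S.exists_rep R hrepEU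
  have hF1 : ∀ r ∈ R, S.inF (r + 1) := by
    intro r hr
    show S.σ (r + 1) = r + 1
    rw [_root_.map_add, _root_.map_one, (hmem r hr).1]
  have hO1 : ∀ r ∈ R, S.inOE (r + 1) := fun r hr => S.inOE_add (hmem r hr).2 S.inOE_one
  set j : E → E := fun r => rep (r + 1) with hj
  have hj1 : ∀ r ∈ R, j r ∈ R := fun r hr => (hrep _ (hF1 r hr) (hO1 r hr)).1
  have hjc : ∀ r ∈ R, S.inpE 1 ((r + 1) - j r) := fun r hr =>
    (hrep _ (hF1 r hr) (hO1 r hr)).2.1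
  have hj2 : ∀ r ∈ R, j (j r) = r := by
    intro r hr
    have key : S.inpE 1 ((j r + 1) - r) := by
      have e : (j r + 1) - r = -((r + 1) - j r) + 2 := by ring
      rw [e]
      exact S.inpE_one_add (S.inpE_one_neg (hjc r hr)) h2
    exact ((hrep _ (hF1 _ (hj1 r hr)) (hO1 _ (hj1 r hr))).2.2 r hr key).symm
  have hj3 : ∀ r ∈ R, j r ≠ r := by
    intro r hr heq
    have hc := hjc r hr
    rw [heq] at hc
    have h1 : S.inpE 1 (1 : E) := by
      have e : (r + 1) - r = 1 := by ring
      rwa [e] at hc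
    rcases h1 with h | h
    · exact one_ne_zero h
    · rw [S.nu_one] at h; omega
  have hev := Setting.even_card_of_fpf R j hj1 hj2 hj3
  rw [hcard] at hev
  exact (Nat.not_even_iff_odd.mpr S.q_odd) hev

lemma two_unit : (2 : E) ≠ 0 ∧ S.ν (2 : E) = 0 := by
  have h2 := S.not_inpE_one_two
  have h20 : (2 : E) ≠ 0 := fun h => h2 (Or.inl h)
  have hge : 0 ≤ S.ν (2 : E) := by
    have h := S.ν_add (one_ne_zero (α := E)) (one_ne_zero (α := E))
      (by rw [one_add_one_eq_two]; exact h20)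
    rw [one_add_one_eq_two, S.nu_one] at h
    omega
  have hle : S.ν (2 : E) ≤ 0 := by
    by_contra h
    exact h2 (Or.inr (by omega))
  exact ⟨h20, by omega⟩

lemma sqeps_unit : S.sqε ≠ 0 ∧ S.ν S.sqε = 0 := by
  have h0 : S.sqε ≠ 0 := by
    intro h
    apply S.ε_ne_zero
    rw [← S.sqε_sq, h, mul_zero]
  have h := S.ν_mul h0 h0
  rw [S.sqε_sq, S.ν_ε] at h
  exact ⟨h0, by omega⟩

/-- Every unit of `O_F` is a square in `E`. -/
lemma unitOF_isSquare {f : E} (hf : S.unitOF f) : ∃ v : E, v * v = f := by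
  classical
  obtain ⟨hσf, hf0, hνf⟩ := hf
  obtain ⟨h20, hν2⟩ := S.two_unit
  obtain ⟨hsq0, hνsq⟩ := S.sqeps_unit
  obtain ⟨R, hcard, hmem, hrepEU⟩ := S.residue_F
  obtain ⟨rep, hrep⟩ := S.exists_rep R hrepEU
  -- the unit representatives
  set Ru : Finset E := R.filter (fun r => r ≠ 0 ∧ S.ν r = 0) with hRu
  have hRum : ∀ r : E, r ∈ Ru ↔ r ∈ R ∧ r ≠ 0 ∧ S.ν r = 0 := by
    intro r; simp [hRu]
  have hrep0 := hrep 0 (_root_.map_zero S.σ) (Or.inl rfl)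
  have hnonunit : ∀ r ∈ R, (¬(r ≠ 0 ∧ S.ν r = 0)) ↔ r = rep 0 := by
    intro r hr
    constructor
    · intro h
      apply hrep0.2.2 r hr
      by_cases hr0 : r = 0
      · exact Or.inl (by rw [hr0, sub_zero])
      · push_neg at h
        have hν := h hr0
        have hν0 := (hmem r hr).2.resolve_left hr0
        right
        rw [zero_sub, S.nu_neg hr0]
        omega
    · rintro rfl
      intro hcon
      rcases hrep0.2.1 with h | h
      · apply hcon.1
        have : (0 : E) - rep 0 = -(rep 0) := by ring
        rw [this, neg_eq_zero] at h
        exact h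
      · rw [zero_sub, S.nu_neg hcon.1] at h
        omega
  have hrep0R := hrep0.1
  have hRuEq : Ru = R.erase (rep 0) := by
    ext r
    rw [hRum, Finset.mem_erase]
    constructor
    · rintro ⟨hrR, hu⟩
      refine ⟨fun he => ?_, hrR⟩
      exact ((hnonunit r hrR).mpr he) hu
    · rintro ⟨hne, hrR⟩
      refine ⟨hrR, ?_⟩
      by_contra h
      exact hne ((hnonunit r hrR).mp h)
  have hRucard : Ru.card = S.q - 1 := by
    rw [hRuEq, Finset.card_erase_of_mem hrep0R, hcard]
  -- representatives of F-units are unit representatives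
  have hrepRu : ∀ x : E, S.inF x → x ≠ 0 → S.ν x = 0 →
      rep x ∈ Ru ∧ S.inpE 1 (x - rep x) := by
    intro x h1 h2 h3
    have h := hrep x h1 (Or.inr (le_of_eq h3.symm))
    have hu := S.unit_of_cong h2 h3 h.2.1
    exact ⟨(hRum _).mpr ⟨h.1, hu⟩, h.2.1⟩
  -- uniqueness of representatives
  have hrepself : ∀ t ∈ R, ∀ s ∈ R, S.inpE 1 (t - s) → s = t := by
    intro t ht s hs hc
    have h1 := hrep t (hmem t ht).1 (hmem t ht).2
    have hst := h1.2.2 s hs hc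
    have htt := h1.2.2 t ht (Or.inl (sub_self t))
    rw [hst, ← htt]
  -- generic fiber bound
  have hfiber : ∀ g : E → E, (∀ r ∈ Ru, S.inF (g r) ∧ g r ≠ 0 ∧ S.ν (g r) = 0) →
      (∀ t s : E, t ∈ Ru → s ∈ Ru → S.inpE 1 (g t - g s) →
        S.inpE 1 (t - s) ∨ S.inpE 1 (t + s)) →
      S.q - 1 ≤ 2 * (Ru.image (fun r => rep (g r))).card := by
    intro g hg hkey
    rw [← hRucard]
    apply Finset.card_le_mul_card_image
    intro b hb
    obtain ⟨t, ht, hbt⟩ := Finset.mem_image.mp hb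
    have htR : t ∈ R := ((hRum t).mp ht).1
    have htu := ((hRum t).mp ht).2
    have hsub : (Ru.filter (fun r => rep (g r) = b)) ⊆ {t, rep (-t)} := by
      intro s hs
      obtain ⟨hsRu, hsb⟩ := Finset.mem_filter.mp hs
      have hsR : s ∈ R := ((hRum s).mp hsRu).1
      have hgt := hg t ht
      have hgs := hg s hsRu
      have hcong : S.inpE 1 (g t - g s) := by
        have e : g t - g s = (g t - rep (g t)) + -(g s - rep (g s)) := by
          rw [hbt, hsb]; ring
        rw [e]
        exact S.inpE_one_add (hrep _ hgt.1 (Or.inr (le_of_eq hgt.2.2.symm))).2.1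
          (S.inpE_one_neg (hrep _ hgs.1 (Or.inr (le_of_eq hgs.2.2.symm))).2.1)
      rcases hkey t s ht hsRu hcong with h | h
      · have : s = t := hrepself t htR s hsR h
        rw [this]
        exact Finset.mem_insert_self _ _
      · -- s = rep (-t)
        have hFt : S.inF (-t) := by
          show S.σ (-t) = -t
          rw [_root_.map_neg, (hmem t htR).1]
        have hOt : S.inOE (-t) := S.inOE_neg (hmem t htR).2
        have hc' : S.inpE 1 ((-t) - s) := by
          have e : (-t) - s = -(t + s) := by ring
          rw [e]
          exact S.inpE_one_neg h
        have := (hrep (-t) hFt hOt).2.2 s hsR hc'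
        rw [this]
        exact Finset.mem_insert_of_mem (Finset.mem_singleton_self _)
    calc (Ru.filter (fun r => rep (g r) = b)).card
        ≤ ({t, rep (-t)} : Finset E).card := Finset.card_le_card hsub
      _ ≤ 2 := Finset.card_insert_le _ _ |>.trans (by simp)
  -- the two images
  set A : Finset E := Ru.image (fun r => rep (r * r)) with hA
  set B : Finset E := Ru.image (fun r => rep (S.ε * (r * r))) with hB
  have hgA : ∀ r ∈ Ru, S.inF (r * r) ∧ r * r ≠ 0 ∧ S.ν (r * r) = 0 := by
    intro r hr
    obtain ⟨hrR, hr0, hrν⟩ := (hRum r).mp hr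
    exact ⟨by show S.σ (r * r) = r * r; rw [_root_.map_mul, (hmem r hrR).1],
      mul_ne_zero hr0 hr0, by rw [S.ν_mul hr0 hr0]; omega⟩
  have hgB : ∀ r ∈ Ru, S.inF (S.ε * (r * r)) ∧ S.ε * (r * r) ≠ 0 ∧ S.ν (S.ε * (r * r)) = 0 := by
    intro r hr
    obtain ⟨h1, h2, h3⟩ := hgA r hr
    refine ⟨by show S.σ (S.ε * (r * r)) = S.ε * (r * r); rw [_root_.map_mul, S.ε_fixed, h1],
      mul_ne_zero S.ε_ne_zero h2, ?_⟩
    rw [S.ν_mul S.ε_ne_zero h2, S.ν_ε]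
    omega
  have hOERu : ∀ r ∈ Ru, S.inOE r := fun r hr => (hmem r ((hRum r).mp hr).1).2
  have hkeyA : ∀ t s : E, t ∈ Ru → s ∈ Ru → S.inpE 1 (t * t - s * s) →
      S.inpE 1 (t - s) ∨ S.inpE 1 (t + s) := by
    intro t s ht hs h
    have e : t * t - s * s = (t - s) * (t + s) := by ring
    rw [e] at h
    exact S.inpE_one_of_mul (S.inOE_sub (hOERu t ht) (hOERu s hs))
      (S.inOE_add (hOERu t ht) (hOERu s hs)) h
  have hcA : S.q - 1 ≤ 2 * A.card := by
    have h := hfiber (fun r => r * r) hgA hkeyA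
    simpa [hA] using h
  have hcB : S.q - 1 ≤ 2 * B.card := hfiber (fun r => S.ε * (r * r)) hgB (by
    intro t s ht hs h
    apply hkeyA t s ht hs
    have e : S.ε * (t * t) - S.ε * (s * s) = S.ε * (t * t - s * s) := by ring
    rw [e] at h
    exact S.inpE_one_of_unit_mul S.ε_ne_zero S.ν_ε h)
  have hAsub : A ⊆ Ru := by
    intro b hb
    obtain ⟨r, hr, hbr⟩ := Finset.mem_image.mp hb
    obtain ⟨h1, h2, h3⟩ := hgA r hr
    rw [← hbr]
    exact (hrepRu _ h1 h2 h3).1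
  have hBsub : B ⊆ Ru := by
    intro b hb
    obtain ⟨r, hr, hbr⟩ := Finset.mem_image.mp hb
    obtain ⟨h1, h2, h3⟩ := hgB r hr
    rw [← hbr]
    exact (hrepRu _ h1 h2 h3).1
  -- disjointness
  have hdisj : Disjoint A B := by
    rw [Finset.disjoint_left]
    intro b hbA hbB
    obtain ⟨t, ht, hbt⟩ := Finset.mem_image.mp hbA
    obtain ⟨s, hs, hbs⟩ := Finset.mem_image.mp hbB
    obtain ⟨ht1, ht2, ht3⟩ := hgA t ht
    obtain ⟨hs1, hs2, hs3⟩ := hgB s hs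
    have hcong : S.inpE 1 (t * t - S.ε * (s * s)) := by
      have e : t * t - S.ε * (s * s) =
          (t * t - rep (t * t)) + -(S.ε * (s * s) - rep (S.ε * (s * s))) := by
        rw [hbt, hbs]; ring
      rw [e]
      exact S.inpE_one_add (hrep _ ht1 (Or.inr (le_of_eq ht3.symm))).2.1
        (S.inpE_one_neg (hrep _ hs1 (Or.inr (le_of_eq hs3.symm))).2.1)
    obtain ⟨htR, ht0, htν⟩ := (hRum t).mp ht
    obtain ⟨hsR, hs0, hsν⟩ := (hRum s).mp hs
    have e : t * t - S.ε * (s * s) = (t - S.sqε * s) * (t + S.sqε * s) := by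
      have := S.sqε_sq
      linear_combination ((s*s) : E) * this
    rw [e] at hcong
    have hOst : S.inOE (S.sqε * s) := S.inOE_mul (Or.inr (le_of_eq hνsq.symm)) (hOERu s hs)
    have h2t : S.inpE 1 (2 * t) → False := by
      intro h
      have := S.inpE_one_of_unit_mul h20 hν2 h
      rcases this with h' | h'
      · exact ht0 h'
      · omega
    rcases S.inpE_one_of_mul (S.inOE_sub (hOERu t ht) hOst)
        (S.inOE_add (hOERu t ht) hOst) hcong with h | h
    · apply h2t
      have hσ : S.inpE 1 (S.σ (t - S.sqε * s)) := S.inpE_one_sigma h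
      have eσ : S.σ (t - S.sqε * s) = t + S.sqε * s := by
        rw [_root_.map_sub, _root_.map_mul, (hmem t htR).1, (hmem s hsR).1, S.sqε_conj]
        ring
      rw [eσ] at hσ
      have e2 : 2 * t = (t - S.sqε * s) + (t + S.sqε * s) := by ring
      rw [e2]
      exact S.inpE_one_add h hσ
    · apply h2t
      have hσ : S.inpE 1 (S.σ (t + S.sqε * s)) := S.inpE_one_sigma h
      have eσ : S.σ (t + S.sqε * s) = t - S.sqε * s := by
        rw [_root_.map_add, _root_.map_mul, (hmem t htR).1, (hmem s hsR).1, S.sqε_conj]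
        ring
      rw [eσ] at hσ
      have e2 : 2 * t = (t + S.sqε * s) + (t - S.sqε * s) := by ring
      rw [e2]
      exact S.inpE_one_add h hσ
  -- counting
  have hunion : (A ∪ B).card = A.card + B.card := Finset.card_union_of_disjoint hdisj
  have hle : (A ∪ B).card ≤ S.q - 1 := by
    rw [← hRucard]
    exact Finset.card_le_card (Finset.union_subset hAsub hBsub)
  have hcover : A ∪ B = Ru := by
    apply Finset.eq_of_subset_of_card_le (Finset.union_subset hAsub hBsub)
    rw [hRucard]
    omega
  -- conclude
  have hfRu := hrepRu f hσf hf0 hνf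
  have hfAB : rep f ∈ A ∪ B := by rw [hcover]; exact hfRu.1
  rcases Finset.mem_union.mp hfAB with hmemA | hmemB
  · obtain ⟨t, ht, hbt⟩ := Finset.mem_image.mp hmemA
    obtain ⟨ht1, ht2, ht3⟩ := hgA t ht
    obtain ⟨htR, ht0, htν⟩ := (hRum t).mp ht
    have hcong : S.inpE 1 (t * t - f) := by
      have e : t * t - f = (t * t - rep (t * t)) + -(f - rep f) := by rw [hbt]; ring
      rw [e]
      exact S.inpE_one_add (hrep _ ht1 (Or.inr (le_of_eq ht3.symm))).2.1
        (S.inpE_one_neg hfRu.2)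
    exact S.hensel_sq f t hf0 hνf ht0 htν hcong
  · obtain ⟨t, ht, hbt⟩ := Finset.mem_image.mp hmemB
    obtain ⟨ht1, ht2, ht3⟩ := hgB t ht
    obtain ⟨htR, ht0, htν⟩ := (hRum t).mp ht
    have hw0 : S.sqε * t ≠ 0 := mul_ne_zero hsq0 ht0
    have hwν : S.ν (S.sqε * t) = 0 := by rw [S.ν_mul hsq0 ht0]; omega
    have hcong : S.inpE 1 ((S.sqε * t) * (S.sqε * t) - f) := by
      have e : (S.sqε * t) * (S.sqε * t) - f =
          (S.ε * (t * t) - rep (S.ε * (t * t))) + -(f - rep f) +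
          (S.sqε * S.sqε - S.ε) * (t * t) := by
        rw [hbt]; ring
      rw [e, S.sqε_sq, sub_self, zero_mul, add_zero]
      exact S.inpE_one_add (hrep _ ht1 (Or.inr (le_of_eq ht3.symm))).2.1
        (S.inpE_one_neg hfRu.2)
    exact S.hensel_sq f (S.sqε * t) hf0 hνf hw0 hwν hcong

/-- Every norm-one unit of `O_E` is a square in `E`. -/
lemma normOne_isSquare {u : E} (hu0 : u ≠ 0) (hνu : S.ν u = 0) (hn : u * S.σ u = 1) :
    ∃ v : E, v * v = u := by
  by_cases h1 : S.inpE 1 (u + 1)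
  · obtain ⟨i, hi⟩ := S.unitOF_isSquare (f := (-1 : E))
      ⟨by rw [_root_.map_neg, _root_.map_one], neg_ne_zero.mpr one_ne_zero, S.nu_neg_one⟩
    have hcond : (1 : E) * 1 - (-u) = 0 ∨ 1 ≤ S.ν ((1 : E) * 1 - (-u)) := by
      have e : (1 : E) * 1 - (-u) = u + 1 := by ring
      rw [e]
      exact h1
    obtain ⟨w, hw⟩ := S.hensel_sq (-u) 1 (neg_ne_zero.mpr hu0)
      (by rw [S.nu_neg hu0]; exact hνu) one_ne_zero S.nu_one hcond
    refine ⟨i * w, ?_⟩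
    have : i * w * (i * w) = (i * i) * (w * w) := by ring
    rw [this, hi, hw]
    ring
  · have hx0 : (1 : E) + u ≠ 0 := fun h => h1 (Or.inl (by rw [add_comm] at h; exact h))
    have hνx : S.ν (1 + u) = 0 := by
      have hge := S.ν_add (one_ne_zero (α := E)) hu0 hx0
      rw [S.nu_one] at hge
      have hlt : ¬ (1 ≤ S.ν (1 + u)) := by
        intro h
        exact h1 (Or.inr (by rwa [add_comm]))
      omega
    have hσx : S.σ (1 + u) ≠ 0 := S.sigma_ne_zero hx0
    have hinv : S.σ u = u⁻¹ := by
      field_simp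
      linear_combination hn
    have hux : u * S.σ (1 + u) = 1 + u := by
      rw [_root_.map_add, _root_.map_one, hinv]
      field_simp
      ring
    have hf : S.unitOF ((1 + u) * S.σ (1 + u)) := by
      refine ⟨?_, mul_ne_zero hx0 hσx, ?_⟩
      · rw [_root_.map_mul, S.σσ]; ring
      · rw [S.ν_mul hx0 hσx, S.ν_σ]; omega
    obtain ⟨v, hv⟩ := S.unitOF_isSquare hf
    refine ⟨v * (S.σ (1 + u))⁻¹, ?_⟩
    have key2 : (v * (S.σ (1 + u))⁻¹) * (v * (S.σ (1 + u))⁻¹) * (S.σ (1 + u) * S.σ (1 + u)) =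
        u * (S.σ (1 + u) * S.σ (1 + u)) := by
      have e1 : (v * (S.σ (1 + u))⁻¹) * (v * (S.σ (1 + u))⁻¹) * (S.σ (1 + u) * S.σ (1 + u)) =
          (v * v) * (((S.σ (1 + u))⁻¹ * S.σ (1 + u)) * ((S.σ (1 + u))⁻¹ * S.σ (1 + u))) := by
        ring
      rw [e1, inv_mul_cancel₀ hσx, one_mul, mul_one, hv]
      linear_combination (-(S.σ (1 + u))) * hux
    exact mul_right_cancel₀ (mul_ne_zero hσx hσx) key2

/-- The key sign computation: `σ c = -c`. -/
lemma sigma_c_eq {εE c : E} (hεE_unit : S.unitOE εE)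
    (hns : ¬ ∃ u : E, S.unitOE u ∧ u * u = εE)
    (hc_unit : S.unitOE c) (hc : c * c = εE * S.σ εE) : S.σ c = -c := by
  obtain ⟨hε0, hνε⟩ := hεE_unit
  obtain ⟨hc0, hνc⟩ := hc_unit
  have hsq : S.σ c * S.σ c = c * c := by
    rw [← _root_.map_mul, hc, _root_.map_mul, S.σσ]
    ring
  have hfac : (S.σ c - c) * (S.σ c + c) = 0 := by linear_combination hsq
  rcases mul_eq_zero.mp hfac with h | h
  · exfalso
    have hσc : S.σ c = c := by rwa [sub_eq_zero] at h
    have hu0 : εE * c⁻¹ ≠ 0 := mul_ne_zero hε0 (inv_ne_zero hc0)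
    have hνu : S.ν (εE * c⁻¹) = 0 := by
      rw [S.ν_mul hε0 (inv_ne_zero hc0), S.nu_inv hc0]
      omega
    have hnorm : (εE * c⁻¹) * S.σ (εE * c⁻¹) = 1 := by
      rw [_root_.map_mul, _root_.map_inv₀, hσc]
      have e : (εE * c⁻¹) * (S.σ εE * c⁻¹) = (εE * S.σ εE) * (c⁻¹ * c⁻¹) := by ring
      rw [e, ← hc]
      field_simp
    obtain ⟨w, hw⟩ := S.normOne_isSquare hu0 hνu hnorm
    obtain ⟨v, hv⟩ := S.unitOF_isSquare ⟨hσc, hc0, hνc⟩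
    apply hns
    have hsqe : (v * w) * (v * w) = εE := by
      have e : (v * w) * (v * w) = (v * v) * (w * w) := by ring
      rw [e, hv, hw]
      field_simp
    have hvw0 : v * w ≠ 0 := by
      intro h
      apply hε0
      rw [← hsqe, h, mul_zero]
    have hvwν : S.ν (v * w) = 0 := by
      have := S.ν_mul hvw0 hvw0
      rw [hsqe] at this
      omega
    exact ⟨v * w, ⟨hvw0, hvwν⟩, hsqe⟩
  · exact eq_neg_of_add_eq_zero_left h

end Setting


/-- Let `ε_E ∈ O_E^×` be a non-square unit, `ξ = diag(ε_E, (ε̄_E)⁻¹)`, and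
`c ∈ O_E^×` with `c² = ε_E·ε̄_E`.  Then `h = [[0,−c],[c⁻¹,0]]` lies in
`SU(1,1)(F) = {g ∈ G : det g = 1}` and `ξ·T_{1,1}·ξ⁻¹ = h·T_{1,1}·h⁻¹`. -/
theorem statement7 {E : Type*} [Field E] (S : Setting E)
    (εE : E) (hεE_unit : S.unitOE εE)
    (hεE_nonsquare : ¬ ∃ u : E, S.unitOE u ∧ u * u = εE)
    (c : E) (hc_unit : S.unitOE c) (hc : c * c = εE * S.σ εE) :
    S.inG !![(0 : E), -c; c⁻¹, 0] ∧ (!![(0 : E), -c; c⁻¹, 0]).det = 1 ∧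
    (fun x => !![εE, 0; 0, (S.σ εE)⁻¹] * x * (!![εE, 0; 0, (S.σ εE)⁻¹])⁻¹) '' S.Tset 1 1 =
      (fun x => !![(0 : E), -c; c⁻¹, 0] * x * (!![(0 : E), -c; c⁻¹, 0])⁻¹) '' S.Tset 1 1 := by
  classical
  obtain ⟨hε0, hνε⟩ := hεE_unit
  have hσε0 : S.σ εE ≠ 0 := S.sigma_ne_zero hε0
  obtain ⟨hc0, hνc⟩ := hc_unit
  have hσc : S.σ c = -c := S.sigma_c_eq ⟨hε0, hνε⟩ hεE_nonsquare ⟨hc0, hνc⟩ hc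
  have hm : S.mbar !![(0 : E), -c; c⁻¹, 0] = !![(0 : E), c; -c⁻¹, 0] := by
    ext i j
    fin_cases i <;> fin_cases j <;>
      simp [Setting.mbar, _root_.map_neg, _root_.map_inv₀, hσc, inv_neg]
  have ht : (!![(0 : E), c; -c⁻¹, 0])ᵀ = !![(0 : E), -c⁻¹; c, 0] := by
    ext i j
    fin_cases i <;> fin_cases j <;> simp
  refine ⟨?_, ?_, ?_⟩
  · show (S.mbar !![(0 : E), -c; c⁻¹, 0])ᵀ * S.wmat * !![(0 : E), -c; c⁻¹, 0] = S.wmat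
    rw [hm, ht, Setting.wmat, Matrix.mul_fin_two, Matrix.mul_fin_two]
    ext i j
    fin_cases i <;> fin_cases j <;> (simp; try field_simp)
  · rw [Matrix.det_fin_two_of]
    field_simp
    norm_num
  · have hξinv : (!![εE, 0; 0, (S.σ εE)⁻¹])⁻¹ = !![εE⁻¹, 0; 0, S.σ εE] := by
      apply Matrix.inv_eq_right_inv
      rw [Matrix.mul_fin_two, Matrix.one_fin_two]
      ext i j
      fin_cases i <;> fin_cases j <;> (simp; try field_simp)
    have hhinv : (!![(0 : E), -c; c⁻¹, 0])⁻¹ = !![(0 : E), c; -c⁻¹, 0] := by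
      apply Matrix.inv_eq_right_inv
      rw [Matrix.mul_fin_two, Matrix.one_fin_two]
      ext i j
      fin_cases i <;> fin_cases j <;> (simp; try field_simp)
    have key : ∀ a b : E,
        !![εE, 0; 0, (S.σ εE)⁻¹] * !![a, b * 1; b * 1, a] * !![εE⁻¹, 0; 0, S.σ εE]
        = !![(0 : E), -c; c⁻¹, 0] * !![a, (-b) * 1; (-b) * 1, a] * !![(0 : E), c; -c⁻¹, 0] := by
      intro a b
      rw [Matrix.mul_fin_two, Matrix.mul_fin_two, Matrix.mul_fin_two, Matrix.mul_fin_two]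
      ext i j
      fin_cases i <;> fin_cases j <;>
        (simp; try field_simp) <;>
        first
          | ring1
          | linear_combination (b : E) * hc
          | linear_combination (-b : E) * hc
          | linear_combination (b * c * c : E) * hc
          | linear_combination (-(b * c * c) : E) * hc
          | exact Or.inl (by linear_combination hc)
          | exact Or.inl (by linear_combination -hc)
    ext x
    simp only [Set.mem_image, Setting.Tset, Set.mem_setOf_eq]
    constructor
    · rintro ⟨m, ⟨a, b, rfl, hab, hsab⟩, rfl⟩
      refine ⟨!![a, (-b) * 1; (-b) * 1, a], ⟨a, -b, rfl, ?_, ?_⟩, ?_⟩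
      · rw [_root_.map_neg, neg_mul_neg]
        exact hab
      · obtain ⟨g, hg1, hg2⟩ := hsab
        exact ⟨-g, by rw [_root_.map_neg, hg1], by rw [mul_neg, hg2, mul_neg]⟩
      · rw [hξinv, hhinv]
        exact (key a b).symm
    · rintro ⟨m, ⟨a, b, rfl, hab, hsab⟩, rfl⟩
      refine ⟨!![a, (-b) * 1; (-b) * 1, a], ⟨a, -b, rfl, ?_, ?_⟩, ?_⟩
      · rw [_root_.map_neg, neg_mul_neg]
        exact hab
      · obtain ⟨g, hg1, hg2⟩ := hsab
        exact ⟨-g, by rw [_root_.map_neg, hg1], by rw [mul_neg, hg2, mul_neg]⟩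
      · rw [hξinv, hhinv]
        have h := key a (-b)
        rw [neg_neg] at h
        exact h
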